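/- Correctness of the integral separation procedure (Algorithm 1 identifies a violated compact-formulation constraint): Let p be an incentive assignment with p_i ∈ P_i for every i ∈ V, and suppose the propagation closure satisfies |A(p)| < ⌈α·n⌉. Then the set X = V ∖ A(p) satisfies |X| ≥ ⌊(1 − α)·n⌋ + 1 and p_i < p̃_i(X) for every i ∈ X; in particular, X defines a violated constraint of the compact formulation. -/

import Mathlib

open scoped Classical
open Finset

noncomputable section

/-- In-neighbors of `i` in the arc set `E`. -/
def Nbr {V : Type*} [Fintype V] (E : Finset (V × V)) (i : V) : Finset V :=
  Finset.univ.filter (fun j => (j, i) ∈ E)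

/-- Propagation iterates of the linear (Γ = 1) GLCIP: `A_0 = ∅` and
`A_{t+1} = {i : p i + Σ_{j ∈ A_t, (j,i) ∈ E} d j i ≥ h i}`. -/
def propIter {V : Type*} [Fintype V] (E : Finset (V × V)) (d : V → V → ℝ)
    (h : V → ℝ) (p : V → ℝ) : ℕ → Finset V
  | 0 => ∅
  | t + 1 => Finset.univ.filter
      (fun i => h i ≤ p i + ∑ j ∈ (propIter E d h p t).filter (fun j => (j, i) ∈ E), d j i)

/-- Propagation closure `A(p) = A_n` with `n = |V|`. -/
def propClosure {V : Type*} [Fintype V] (E : Finset (V × V)) (d : V → V → ℝ)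
    (h : V → ℝ) (p : V → ℝ) : Finset V :=
  propIter E d h p (Fintype.card V)

lemma propIter_subset_succ {V : Type*} [Fintype V] (E : Finset (V × V)) (d : V → V → ℝ)
    (h : V → ℝ) (p : V → ℝ) (hd : ∀ a ∈ E, 0 < d a.1 a.2) :
    ∀ t, propIter E d h p t ⊆ propIter E d h p (t + 1) := by
  intro t
  induction t with
  | zero => exact Finset.empty_subset _
  | succ t ih =>
      intro i hi
      have hi' : h i ≤ p i + ∑ j ∈ (propIter E d h p t).filter (fun j => (j, i) ∈ E), d j i :=
        (Finset.mem_filter.mp hi).2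
      refine Finset.mem_filter.mpr ⟨Finset.mem_univ i, ?_⟩
      have hs : ∑ j ∈ (propIter E d h p t).filter (fun j => (j, i) ∈ E), d j i
          ≤ ∑ j ∈ (propIter E d h p (t + 1)).filter (fun j => (j, i) ∈ E), d j i := by
        refine Finset.sum_le_sum_of_subset_of_nonneg (Finset.filter_subset_filter _ ih) ?_
        intro j hj _
        exact le_of_lt (hd (j, i) (Finset.mem_filter.mp hj).2)
      linarith

lemma propIter_fix_of_eq {V : Type*} [Fintype V] (E : Finset (V × V)) (d : V → V → ℝ)
    (h : V → ℝ) (p : V → ℝ) (t : ℕ)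
    (heq : propIter E d h p t = propIter E d h p (t + 1)) :
    ∀ s, propIter E d h p (t + s) = propIter E d h p t := by
  intro s
  induction s with
  | zero => rfl
  | succ s ih =>
      have step : ∀ u, propIter E d h p (u + 1) = Finset.univ.filter
          (fun i => h i ≤ p i + ∑ j ∈ (propIter E d h p u).filter (fun j => (j, i) ∈ E), d j i) :=
        fun u => rfl
      show propIter E d h p ((t + s) + 1) = propIter E d h p t
      rw [step, ih, ← step, ← heq]

lemma propClosure_fixed {V : Type*} [Fintype V] (E : Finset (V × V)) (d : V → V → ℝ)
    (h : V → ℝ) (p : V → ℝ) (hd : ∀ a ∈ E, 0 < d a.1 a.2) :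
    propIter E d h p (Fintype.card V + 1) = propClosure E d h p := by
  set n := Fintype.card V
  have hex : ∃ t ≤ n, propIter E d h p t = propIter E d h p (t + 1) := by
    by_contra hc
    push_neg at hc
    have hcard : ∀ t ≤ n + 1, t ≤ (propIter E d h p t).card := by
      intro t
      induction t with
      | zero => simp
      | succ t ih =>
          intro ht
          have h1 : t ≤ (propIter E d h p t).card := ih (by omega)
          have hss : propIter E d h p t ⊂ propIter E d h p (t + 1) :=
            (Finset.ssubset_iff_subset_ne).mpr
              ⟨propIter_subset_succ E d h p hd t, hc t (by omega)⟩
          have := Finset.card_lt_card hss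
          omega
    have := hcard (n + 1) le_rfl
    have hle : (propIter E d h p (n + 1)).card ≤ n := Finset.card_le_univ _
    omega
  obtain ⟨t, ht, heq⟩ := hex
  have h1 : propIter E d h p (t + (n - t)) = propIter E d h p t :=
    propIter_fix_of_eq E d h p t heq (n - t)
  have h2 : propIter E d h p (t + (n + 1 - t)) = propIter E d h p t :=
    propIter_fix_of_eq E d h p t heq (n + 1 - t)
  have e1 : t + (n - t) = n := by omega
  have e2 : t + (n + 1 - t) = n + 1 := by omega
  rw [e1] at h1; rw [e2] at h2
  unfold propClosure
  rw [h1, h2]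

/-- Correctness of the integral separation procedure (Algorithm 1): if the propagation
closure activates fewer than `⌈α·n⌉` nodes, then `X = V ∖ A(p)` defines a violated
compact-formulation constraint. -/
theorem integral_separation_correct {V : Type*} [Fintype V]
    (E : Finset (V × V)) (d : V → V → ℝ) (h : V → ℝ) (P : V → Finset ℝ) (α : ℝ)
    (hE : ∀ a ∈ E, a.1 ≠ a.2)
    (hd : ∀ a ∈ E, 0 < d a.1 a.2)
    (hh : ∀ i, 0 < h i)
    (hP0 : ∀ i, (0 : ℝ) ∈ P i)
    (hPnn : ∀ i, ∀ q ∈ P i, 0 ≤ q)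
    (hα0 : 0 ≤ α) (hα1 : α ≤ 1)
    (hact : ∀ i, ∃ q ∈ P i, h i ≤ q)
    (pt : Finset V → V → ℝ)
    (hpt : ∀ (X : Finset V), ∀ i ∈ X,
      IsLeast {q : ℝ | q ∈ P i ∧ h i ≤ q + ∑ j ∈ Nbr E i \ X, d j i} (pt X i))
    (p : V → ℝ) (hp : ∀ i, p i ∈ P i)
    (hsmall : ((propClosure E d h p).card : ℤ) < ⌈α * (Fintype.card V : ℝ)⌉) :
    (((Finset.univ \ propClosure E d h p).card : ℤ)
        ≥ ⌊(1 - α) * (Fintype.card V : ℝ)⌋ + 1) ∧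
    ∀ i ∈ Finset.univ \ propClosure E d h p,
      p i < pt (Finset.univ \ propClosure E d h p) i := by
  set n := Fintype.card V with hn
  set A := propClosure E d h p with hA
  constructor
  · have hcard : (Finset.univ \ A).card = n - A.card := by
      simpa using Finset.card_univ_diff A
    have hle : A.card ≤ n := Finset.card_le_univ A
    have hfloor : ⌊(1 - α) * (n : ℝ)⌋ = n - ⌈α * (n : ℝ)⌉ := by
      have : (1 - α) * (n : ℝ) = (n : ℝ) + (-(α * (n : ℝ))) := by ring
      rw [this, Int.floor_natCast_add, Int.floor_neg]
      push_cast
      ring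
    rw [hcard, hfloor]
    have : ((n - A.card : ℕ) : ℤ) = (n : ℤ) - A.card := by
      push_cast [Nat.cast_sub hle]
      ring
    omega
  · intro i hi
    set X := Finset.univ \ A with hX
    have hiA : i ∉ A := (Finset.mem_sdiff.mp hi).2
    have hfix : propIter E d h p (n + 1) = A := propClosure_fixed E d h p hd
    have hiA' : i ∉ propIter E d h p (n + 1) := by rw [hfix]; exact hiA
    have hlt : p i + ∑ j ∈ A.filter (fun j => (j, i) ∈ E), d j i < h i := by
      by_contra hc
      push_neg at hc
      apply hiA'
      simp only [propIter, Finset.mem_filter, Finset.mem_univ, true_and]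
      exact hc
    have hsum : ∑ j ∈ Nbr E i \ X, d j i
        = ∑ j ∈ A.filter (fun j => (j, i) ∈ E), d j i := by
      apply Finset.sum_congr _ (fun _ _ => rfl)
      ext j
      simp only [Nbr, hX, Finset.mem_sdiff, Finset.mem_filter, Finset.mem_univ, true_and]
      tauto
    obtain ⟨⟨hmemP, hge⟩, hlb⟩ := hpt X i hi
    by_contra hc
    push_neg at hc
    rw [hsum] at hge
    have : h i ≤ p i + ∑ j ∈ A.filter (fun j => (j, i) ∈ E), d j i := by linarith
    linarith
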